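/- Let d ≥ 1 and p > d be integers, y, z ∈ ℕ^d with z_j ≥ y_j ≥ 1 for all j, and suppose ℓ_min := min_{1≤j≤d} (z_j − y_j) ≥ 1. Let K : ℤ^d → ℂ satisfy |K(h)| ≤ Q (max_{1≤j≤d} |h_j|)^{−p} for all h ∈ ℤ^d with h ≠ 0, where Q > 0. Then for every x_1 ∈ J_y, the sums Σ_{k ∈ ℤ^d, k ≠ 0} |K(x_1 − x_2 + (k ∘ z))| converge, and Σ_{x_2 ∈ J_y} Σ_{k ∈ ℤ^d, k ≠ 0} |K(x_1 − x_2 + (k ∘ z))| ≤ Σ_{ℓ = ℓ_min}^∞ ((2ℓ+1)^d − (2ℓ−1)^d) Q ℓ^{−p}. -/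

import Mathlib

open scoped Real BigOperators
open scoped ENNReal NNReal

noncomputable section

/-- The lattice `J_y = {1,…,y_1} × ⋯ × {1,…,y_d} ⊆ ℤ^d`. -/
def latJ {d : ℕ} (y : Fin d → ℕ) : Finset (Fin d → ℤ) :=
  Finset.Icc 1 (fun j => (y j : ℤ))

lemma aux_pow_sub_pow {a b : ℝ} (hb : 0 ≤ b) (hab : b ≤ a) (n : ℕ) :
    a ^ n - b ^ n ≤ n * a ^ (n - 1) * (a - b) := by
  have ha : 0 ≤ a := hb.trans hab
  rw [← geom_sum₂_mul]
  apply mul_le_mul_of_nonneg_right _ (sub_nonneg.2 hab)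
  calc ∑ i ∈ Finset.range n, a ^ i * b ^ (n - 1 - i)
      ≤ ∑ _i ∈ Finset.range n, a ^ (n - 1) := by
        refine Finset.sum_le_sum fun i hi => ?_
        have hi' : i + (n - 1 - i) = n - 1 := by
          have := Finset.mem_range.mp hi; omega
        calc a ^ i * b ^ (n - 1 - i) ≤ a ^ i * a ^ (n - 1 - i) := by gcongr
          _ = a ^ (n - 1) := by rw [← pow_add, hi']
    _ = n * a ^ (n - 1) := by simp [mul_comm]

lemma aux_cast_card {d n : ℕ} (hn : 1 ≤ n) :
    ((((2 * n + 1) ^ d - (2 * n - 1) ^ d : ℕ)) : ℝ)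
      = (2 * (n : ℝ) + 1) ^ d - (2 * (n : ℝ) - 1) ^ d := by
  have hle : (2 * n - 1) ^ d ≤ (2 * n + 1) ^ d := Nat.pow_le_pow_left (by omega) d
  rw [Nat.cast_sub hle, Nat.cast_pow, Nat.cast_pow, Nat.cast_sub (by omega : 1 ≤ 2 * n)]
  push_cast
  ring_nf

lemma aux_term_nonneg {d p n : ℕ} {Q : ℝ} (hQ : 0 < Q) (hn : 1 ≤ n) :
    0 ≤ (2 * (n : ℝ) + 1) ^ d - (2 * (n : ℝ) - 1) ^ d := by
  have h1 : (1:ℝ) ≤ (n:ℝ) := by exact_mod_cast hn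
  have := pow_le_pow_left₀ (by linarith : (0:ℝ) ≤ 2 * (n:ℝ) - 1)
    (by linarith : 2 * (n:ℝ) - 1 ≤ 2 * (n:ℝ) + 1) d
  linarith

lemma aux_term_bound {d p : ℕ} (hd : 1 ≤ d) (hdp : d < p) {Q : ℝ} (hQ : 0 < Q)
    {n : ℕ} (hn : 1 ≤ n) :
    ((2 * (n : ℝ) + 1) ^ d - (2 * (n : ℝ) - 1) ^ d) * Q / (n : ℝ) ^ p
      ≤ (2 * d * 3 ^ (d - 1) * Q) * (1 / (n : ℝ) ^ 2) := by
  have h1 : (1:ℝ) ≤ (n:ℝ) := by exact_mod_cast hn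
  have hnum : (2 * (n : ℝ) + 1) ^ d - (2 * (n : ℝ) - 1) ^ d
      ≤ 2 * d * 3 ^ (d - 1) * (n : ℝ) ^ (d - 1) := by
    have e1 := aux_pow_sub_pow (a := 2 * (n:ℝ) + 1) (b := 2 * (n:ℝ) - 1)
      (by linarith) (by linarith) d
    have e2 : ((2 * (n:ℝ) + 1)) ^ (d - 1) ≤ (3 * (n:ℝ)) ^ (d - 1) :=
      pow_le_pow_left₀ (by linarith) (by linarith) _
    have e3 : (3 * (n:ℝ)) ^ (d - 1) = 3 ^ (d - 1) * (n:ℝ) ^ (d - 1) := mul_pow _ _ _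
    have e4 : (0:ℝ) ≤ (d:ℝ) := by positivity
    nlinarith [pow_nonneg (by linarith : (0:ℝ) ≤ 2 * (n:ℝ) + 1) (d - 1)]
  have hsplit : (n : ℝ) ^ (d - 1) * (n : ℝ) ^ 2 ≤ (n : ℝ) ^ p := by
    rw [← pow_add]
    exact pow_le_pow_right₀ h1 (by omega)
  have hd1 : (0:ℝ) < (n:ℝ) ^ (d-1) := by positivity
  have hq2 : (0:ℝ) < (n:ℝ) ^ 2 := by positivity
  calc ((2 * (n : ℝ) + 1) ^ d - (2 * (n : ℝ) - 1) ^ d) * Q / (n : ℝ) ^ p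
      ≤ (2 * d * 3 ^ (d - 1) * (n : ℝ) ^ (d - 1) * Q) / ((n : ℝ) ^ (d - 1) * (n : ℝ) ^ 2) := by
        apply div_le_div₀ (by positivity) (by nlinarith) (by positivity) hsplit
    _ = (2 * d * 3 ^ (d - 1) * Q) * (1 / (n : ℝ) ^ 2) := by
        field_simp

lemma aux_mem_latJ {d : ℕ} {y : Fin d → ℕ} {x : Fin d → ℤ} :
    x ∈ latJ y ↔ ∀ j, 1 ≤ x j ∧ x j ≤ (y j : ℤ) := by
  simp [latJ, Finset.mem_Icc, Pi.le_def, forall_and]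

lemma aux_key {d : ℕ} {y z : Fin d → ℕ} (hyz : ∀ j, 1 ≤ y j ∧ y j ≤ z j)
    {L : ℕ} (hLj : ∀ j, (L : ℤ) ≤ (z j : ℤ) - (y j : ℤ))
    {x₁ x₂ : Fin d → ℤ} (hx₁ : x₁ ∈ latJ y) (hx₂ : x₂ ∈ latJ y)
    {k : Fin d → ℤ} (hk : k ≠ 0) :
    L ≤ (Finset.univ.sup fun j => (((x₁ - x₂ + fun j => k j * (z j : ℤ))) j).natAbs) ∧
      (x₁ - x₂ + fun j => k j * (z j : ℤ)) ≠ 0 := by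
  obtain ⟨j, hj⟩ : ∃ j, k j ≠ 0 := Function.ne_iff.mp hk
  set h : Fin d → ℤ := x₁ - x₂ + fun j => k j * (z j : ℤ) with hh
  have hhj : h j = x₁ j - x₂ j + k j * (z j : ℤ) := by simp [hh]
  have h1 := aux_mem_latJ.mp hx₁ j
  have h2 := aux_mem_latJ.mp hx₂ j
  have hz1 : (1 : ℤ) ≤ (z j : ℤ) := by exact_mod_cast (hyz j).1.trans (hyz j).2
  have hkabs : 1 ≤ |k j| := Int.one_le_abs hj
  have t1 : |k j * (z j : ℤ)| ≤ |h j| + |x₁ j - x₂ j| := by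
    calc |k j * (z j : ℤ)| = |h j + (x₂ j - x₁ j)| := by rw [hhj]; ring_nf
      _ ≤ |h j| + |x₂ j - x₁ j| := abs_add_le _ _
      _ = |h j| + |x₁ j - x₂ j| := by rw [abs_sub_comm]
  have t2 : |x₁ j - x₂ j| ≤ (y j : ℤ) - 1 := by
    rw [abs_le]; constructor <;> linarith [h1.1, h1.2, h2.1, h2.2]
  have t3 : (z j : ℤ) ≤ |k j * (z j : ℤ)| := by
    rw [abs_mul, abs_of_nonneg (by linarith : (0:ℤ) ≤ (z j : ℤ))]
    nlinarith
  have hLabs : (L : ℤ) + 1 ≤ |h j| := by linarith [hLj j]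
  constructor
  · have h3 : (L : ℤ) ≤ ((h j).natAbs : ℤ) := by
      rw [← Int.abs_eq_natAbs]; linarith
    have hL' : L ≤ (h j).natAbs := by exact_mod_cast h3
    exact hL'.trans (Finset.le_sup (f := fun j => (h j).natAbs) (Finset.mem_univ j))
  · intro h0
    have : h j = 0 := by rw [h0]; rfl
    rw [this] at hLabs
    simp at hLabs
    omega

lemma aux_inj {d : ℕ} {y z : Fin d → ℕ} (hyz : ∀ j, 1 ≤ y j ∧ y j ≤ z j)
    (x₁ : Fin d → ℤ) :
    Function.Injective (fun pr : ↑(latJ y) × {k : Fin d → ℤ // k ≠ 0} =>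
      x₁ - (pr.1 : Fin d → ℤ) + fun j => pr.2.1 j * (z j : ℤ)) := by
  rintro ⟨⟨x₂, hx₂⟩, ⟨k, hk⟩⟩ ⟨⟨x₂', hx₂'⟩, ⟨k', hk'⟩⟩ heq
  simp only at heq
  have hj : ∀ j, x₁ j - x₂ j + k j * (z j : ℤ) = x₁ j - x₂' j + k' j * (z j : ℤ) := by
    intro j
    have := congrFun heq j
    simpa [Pi.add_apply, Pi.sub_apply] using this
  have hfor : ∀ j, x₂ j = x₂' j ∧ k j = k' j := by
    intro j
    have hz1 : (1 : ℤ) ≤ (z j : ℤ) := by exact_mod_cast (hyz j).1.trans (hyz j).2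
    by_cases hkk : k j = k' j
    · refine ⟨?_, hkk⟩
      have := hj j; rw [hkk] at this; linarith
    · exfalso
      have e1 : x₂' j - x₂ j = (k' j - k j) * (z j : ℤ) := by
        have := hj j
        have e2 : (k' j - k j) * (z j : ℤ) = k' j * (z j : ℤ) - k j * (z j : ℤ) :=
          sub_mul _ _ _
        linarith
      have b1 := aux_mem_latJ.mp hx₂ j
      have b2 := aux_mem_latJ.mp hx₂' j
      have hyzj : y j ≤ z j := (hyz j).2
      have habs1 : |x₂' j - x₂ j| < (z j : ℤ) := by
        rw [abs_lt]; omega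
      have habs2 : (z j : ℤ) ≤ |x₂' j - x₂ j| := by
        rw [e1, abs_mul, abs_of_nonneg (by linarith : (0:ℤ) ≤ (z j : ℤ))]
        have h1 : 1 ≤ |k' j - k j| := Int.one_le_abs (sub_ne_zero.2 fun h => hkk h.symm)
        nlinarith
      linarith
  have hx : x₂ = x₂' := funext fun j => (hfor j).1
  have hk2 : k = k' := funext fun j => (hfor j).2
  subst hx; subst hk2; rfl

lemma aux_box_mem {d m : ℕ} (h : Fin d → ℤ) :
    h ∈ Finset.Icc (fun _ => -(m : ℤ)) (fun _ => (m : ℤ)) ↔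
      (Finset.univ.sup fun j => (h j).natAbs) ≤ m := by
  rw [Finset.mem_Icc, Finset.sup_le_iff]
  simp only [Pi.le_def, Finset.mem_univ, forall_const]
  constructor
  · rintro ⟨h1, h2⟩ j; have := h1 j; have := h2 j; omega
  · intro hb
    constructor <;> intro j <;> (have := hb j; omega)

lemma aux_box_card {d m : ℕ} :
    (Finset.Icc (fun _ => -(m : ℤ)) (fun _ => (m : ℤ)) : Finset (Fin d → ℤ)).card
      = (2 * m + 1) ^ d := by
  rw [Pi.card_Icc]
  have h : ∀ _j : Fin d, (Finset.Icc (-(m : ℤ)) (m : ℤ)).card = 2 * m + 1 := by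
    intro j; rw [Int.card_Icc]; omega
  rw [Finset.prod_congr rfl fun j _ => h j]
  rw [Finset.prod_const, Finset.card_univ, Fintype.card_fin]

lemma aux_fiber_tsum {d n : ℕ} (hn : 1 ≤ n) (c : ℝ≥0∞) :
    ∑' _h : {h : Fin d → ℤ // (Finset.univ.sup fun j => (h j).natAbs) = n}, c
      = (((2 * n + 1) ^ d - (2 * n - 1) ^ d : ℕ) : ℝ≥0∞) * c := by
  have hsub : (Finset.Icc (fun _ => -((n - 1 : ℕ) : ℤ)) (fun _ => ((n - 1 : ℕ) : ℤ)) :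
      Finset (Fin d → ℤ)) ⊆ Finset.Icc (fun _ => -(n : ℤ)) (fun _ => (n : ℤ)) := by
    apply Finset.Icc_subset_Icc <;> (intro j; simp only [Pi.le_def]; omega)
  have e : {h : Fin d → ℤ // (Finset.univ.sup fun j => (h j).natAbs) = n}
      ≃ ↑(Finset.Icc (fun _ => -(n : ℤ)) (fun _ => (n : ℤ)) \
          Finset.Icc (fun _ => -((n - 1 : ℕ) : ℤ)) (fun _ => ((n - 1 : ℕ) : ℤ)) :
          Finset (Fin d → ℤ)) := by
    refine Equiv.subtypeEquivRight fun h => ?_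
    rw [Finset.mem_sdiff, aux_box_mem, aux_box_mem]
    omega
  calc ∑' _h : {h : Fin d → ℤ // (Finset.univ.sup fun j => (h j).natAbs) = n}, c
      = ∑' _h : ↑(Finset.Icc (fun _ => -(n : ℤ)) (fun _ => (n : ℤ)) \
          Finset.Icc (fun _ => -((n - 1 : ℕ) : ℤ)) (fun _ => ((n - 1 : ℕ) : ℤ)) :
          Finset (Fin d → ℤ)), c := e.tsum_eq fun _ => c
    _ = _ := by
      rw [tsum_fintype, Finset.sum_const, Finset.card_univ, Fintype.card_coe, Finset.card_sdiff_of_subset hsub,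
        aux_box_card, aux_box_card, nsmul_eq_mul]
      have h21 : 2 * (n - 1) + 1 = 2 * n - 1 := by omega
      rw [h21]


/-- if `|K(h)| ≤ Q (max_j |h_j|)^{−p}` for `h ≠ 0` and
`ℓ_min = min_j (z_j − y_j) ≥ 1`, then for every `x₁ ∈ J_y` the sums over nonzero `k` of
`|K(x₁ − x₂ + k∘z)|` converge and
`Σ_{x₂ ∈ J_y} Σ_{k ≠ 0} |K(x₁ − x₂ + k∘z)| ≤ Σ_{ℓ ≥ ℓ_min} ((2ℓ+1)^d − (2ℓ−1)^d) Q ℓ^{−p}`. -/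
theorem stmt_10 (d p : ℕ) (hd : 1 ≤ d) (hdp : d < p)
    (y z : Fin d → ℕ) (hyz : ∀ j, 1 ≤ y j ∧ y j ≤ z j)
    (hl : 1 ≤ sInf (Set.range fun j => z j - y j))
    (K : (Fin d → ℤ) → ℂ) (Q : ℝ) (hQ : 0 < Q)
    (hK : ∀ h : Fin d → ℤ, h ≠ 0 →
      ‖K h‖ ≤ Q / (((Finset.univ.sup fun j => (h j).natAbs) : ℕ) : ℝ) ^ p) :
    ∀ x₁ ∈ latJ y,
      (∀ x₂ ∈ latJ y,
        Summable fun k : {k : Fin d → ℤ // k ≠ 0} =>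
          ‖K (x₁ - x₂ + fun j => k.1 j * (z j : ℤ))‖) ∧
      ∑ x₂ ∈ latJ y, ∑' k : {k : Fin d → ℤ // k ≠ 0},
          ‖K (x₁ - x₂ + fun j => k.1 j * (z j : ℤ))‖
        ≤ ∑' l : {l : ℕ // sInf (Set.range fun j => z j - y j) ≤ l},
            ((2 * (l.1 : ℝ) + 1) ^ d - (2 * (l.1 : ℝ) - 1) ^ d) * Q / (l.1 : ℝ) ^ p := by
  intro x₁ hx₁
  set L := sInf (Set.range fun j => z j - y j) with hLdef
  have hLj : ∀ j, (L : ℤ) ≤ (z j : ℤ) - (y j : ℤ) := by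
    intro j
    have h1 : L ≤ z j - y j := Nat.sInf_le ⟨j, rfl⟩
    have h2 := (hyz j).2
    omega
  set F : (Fin d → ℤ) → ℝ≥0∞ := fun h =>
    if L ≤ (Finset.univ.sup fun j => (h j).natAbs) then
      ENNReal.ofReal (Q / (((Finset.univ.sup fun j => (h j).natAbs) : ℕ) : ℝ) ^ p) else 0
    with hFdef
  set R : ℝ≥0∞ := ∑' l : {l : ℕ // L ≤ l},
      ENNReal.ofReal (((2 * (l.1 : ℝ) + 1) ^ d - (2 * (l.1 : ℝ) - 1) ^ d) * Q / (l.1 : ℝ) ^ p)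
    with hRdef
  -- step 1 : total sum of F equals R
  have hT : ∑' h : Fin d → ℤ, F h = R := by
    have e := (Equiv.sigmaFiberEquiv
        (fun h : Fin d → ℤ => Finset.univ.sup fun j => (h j).natAbs)).tsum_eq F
    rw [← e, ENNReal.tsum_sigma']
    show (∑' (n : ℕ) (h : {h : Fin d → ℤ // (Finset.univ.sup fun j => (h j).natAbs) = n}),
      F h.1) = R
    have hzero : ∀ n : ℕ, ¬ L ≤ n →
        (∑' h : {h : Fin d → ℤ // (Finset.univ.sup fun j => (h j).natAbs) = n}, F h.1) = 0 := by
      intro n hn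
      have hz : ∀ h : {h : Fin d → ℤ // (Finset.univ.sup fun j => (h j).natAbs) = n},
          F h.1 = 0 := by
        intro h
        simp only [hFdef, h.2, if_neg hn]
      rw [tsum_congr hz, tsum_zero]
    have hpos : ∀ n : ℕ, L ≤ n →
        (∑' h : {h : Fin d → ℤ // (Finset.univ.sup fun j => (h j).natAbs) = n}, F h.1)
          = ENNReal.ofReal (((2 * (n : ℝ) + 1) ^ d - (2 * (n : ℝ) - 1) ^ d) * Q / (n : ℝ) ^ p) := by
      intro n hn
      have hn1 : 1 ≤ n := le_trans hl hn
      have hconst : ∀ h : {h : Fin d → ℤ // (Finset.univ.sup fun j => (h j).natAbs) = n},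
          F h.1 = ENNReal.ofReal (Q / (n : ℝ) ^ p) := by
        intro h
        simp only [hFdef, h.2, if_pos hn]
      rw [tsum_congr hconst, aux_fiber_tsum hn1,
        ← ENNReal.ofReal_natCast ((2 * n + 1) ^ d - (2 * n - 1) ^ d),
        ← ENNReal.ofReal_mul (by positivity), aux_cast_card hn1]
      congr 1
      ring
    calc (∑' (n : ℕ) (h : {h : Fin d → ℤ // (Finset.univ.sup fun j => (h j).natAbs) = n}), F h.1)
        = ∑' n : {n : ℕ // L ≤ n},
            (∑' h : {h : Fin d → ℤ //
              (Finset.univ.sup fun j => (h j).natAbs) = n.1}, F h.1) := by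
          refine (tsum_subtype_eq_of_support_subset ?_).symm
          intro n hn
          by_contra hc
          exact hn (hzero n hc)
      _ = R := by
          rw [hRdef]
          exact tsum_congr fun l => hpos l.1 l.2
  -- step 2 : R is finite
  have hRne : R ≠ ⊤ := by
    have hsummable : Summable
        (fun l : {l : ℕ // L ≤ l} => (2 * (d:ℝ) * 3 ^ (d - 1) * Q) * (1 / (l.1 : ℝ) ^ 2)) := by
      have h0 : Summable (fun n : ℕ => (2 * (d:ℝ) * 3 ^ (d - 1) * Q) * (1 / (n : ℝ) ^ 2)) :=
        (Real.summable_one_div_nat_pow.mpr one_lt_two).mul_left _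
      exact h0.subtype _
    have hle : R ≤ ENNReal.ofReal
        (∑' l : {l : ℕ // L ≤ l}, (2 * (d:ℝ) * 3 ^ (d - 1) * Q) * (1 / (l.1 : ℝ) ^ 2)) := by
      rw [ENNReal.ofReal_tsum_of_nonneg (fun l => by positivity) hsummable, hRdef]
      exact ENNReal.tsum_le_tsum fun l =>
        ENNReal.ofReal_le_ofReal (aux_term_bound hd hdp hQ (le_trans hl l.2))
    exact ne_top_of_le_ne_top ENNReal.ofReal_ne_top hle
  -- step 3 : pointwise domination
  have hdom : ∀ (x₂ : Fin d → ℤ), x₂ ∈ latJ y → ∀ k : {k : Fin d → ℤ // k ≠ 0},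
      ENNReal.ofReal ‖K (x₁ - x₂ + fun j => k.1 j * (z j : ℤ))‖
        ≤ F (x₁ - x₂ + fun j => k.1 j * (z j : ℤ)) := by
    intro x₂ hx₂ k
    obtain ⟨hLle, hne0⟩ := aux_key hyz hLj hx₁ hx₂ k.2
    calc ENNReal.ofReal ‖K (x₁ - x₂ + fun j => k.1 j * (z j : ℤ))‖
        ≤ ENNReal.ofReal (Q / (((Finset.univ.sup fun j =>
            (((x₁ - x₂ + fun j => k.1 j * (z j : ℤ)) j)).natAbs) : ℕ) : ℝ) ^ p) :=
          ENNReal.ofReal_le_ofReal (hK _ hne0)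
      _ = F (x₁ - x₂ + fun j => k.1 j * (z j : ℤ)) := by
          simp only [hFdef, if_pos hLle]
  -- step 4 : double sum bound
  have hdouble : (∑' pr : ↑(latJ y) × {k : Fin d → ℤ // k ≠ 0},
      ENNReal.ofReal ‖K (x₁ - (pr.1 : Fin d → ℤ) + fun j => pr.2.1 j * (z j : ℤ))‖) ≤ R := by
    calc (∑' pr : ↑(latJ y) × {k : Fin d → ℤ // k ≠ 0},
        ENNReal.ofReal ‖K (x₁ - (pr.1 : Fin d → ℤ) + fun j => pr.2.1 j * (z j : ℤ))‖)
        ≤ ∑' pr : ↑(latJ y) × {k : Fin d → ℤ // k ≠ 0},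
            F (x₁ - (pr.1 : Fin d → ℤ) + fun j => pr.2.1 j * (z j : ℤ)) :=
          ENNReal.tsum_le_tsum fun pr => hdom pr.1.1 pr.1.2 pr.2
      _ ≤ ∑' h : Fin d → ℤ, F h :=
          ENNReal.tsum_comp_le_tsum_of_injective (aux_inj hyz x₁) F
      _ = R := hT
  have hsingle : ∀ (x₂ : Fin d → ℤ) (hx₂ : x₂ ∈ latJ y),
      (∑' k : {k : Fin d → ℤ // k ≠ 0},
        ENNReal.ofReal ‖K (x₁ - x₂ + fun j => k.1 j * (z j : ℤ))‖) ≤ R := by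
    intro x₂ hx₂
    have h1 : (∑' k : {k : Fin d → ℤ // k ≠ 0},
        ENNReal.ofReal ‖K (x₁ - x₂ + fun j => k.1 j * (z j : ℤ))‖)
        = ∑' k : {k : Fin d → ℤ // k ≠ 0},
          (fun pr : ↑(latJ y) × {k : Fin d → ℤ // k ≠ 0} =>
            ENNReal.ofReal ‖K (x₁ - (pr.1 : Fin d → ℤ) + fun j => pr.2.1 j * (z j : ℤ))‖)
            ((⟨x₂, hx₂⟩ : ↑(latJ y)), k) := rfl
    rw [h1]
    exact (ENNReal.tsum_comp_le_tsum_of_injective (Prod.mk_right_injective _) _).trans hdouble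
  have hfin : ∀ (x₂ : Fin d → ℤ), x₂ ∈ latJ y →
      (∑' k : {k : Fin d → ℤ // k ≠ 0},
        ENNReal.ofReal ‖K (x₁ - x₂ + fun j => k.1 j * (z j : ℤ))‖) ≠ ⊤ :=
    fun x₂ hx₂ => ne_top_of_le_ne_top hRne (hsingle x₂ hx₂)
  have hsummK : ∀ x₂ ∈ latJ y, Summable fun k : {k : Fin d → ℤ // k ≠ 0} =>
      ‖K (x₁ - x₂ + fun j => k.1 j * (z j : ℤ))‖ := by
    intro x₂ hx₂
    have := ENNReal.summable_toReal (hfin x₂ hx₂)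
    exact this.congr fun k => ENNReal.toReal_ofReal (norm_nonneg _)
  refine ⟨hsummK, ?_⟩
  have hRtoReal : R.toReal = ∑' l : {l : ℕ // L ≤ l},
      ((2 * (l.1 : ℝ) + 1) ^ d - (2 * (l.1 : ℝ) - 1) ^ d) * Q / (l.1 : ℝ) ^ p := by
    rw [hRdef, ENNReal.tsum_toReal_eq (fun _ => ENNReal.ofReal_ne_top)]
    refine tsum_congr fun l => ENNReal.toReal_ofReal ?_
    have hn1 : 1 ≤ l.1 := le_trans hl l.2
    have := aux_term_nonneg (p := p) hQ hn1 (d := d)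
    positivity
  rw [← hRtoReal]
  calc ∑ x₂ ∈ latJ y, ∑' k : {k : Fin d → ℤ // k ≠ 0},
        ‖K (x₁ - x₂ + fun j => k.1 j * (z j : ℤ))‖
      = ∑ x₂ ∈ latJ y, (∑' k : {k : Fin d → ℤ // k ≠ 0},
          ENNReal.ofReal ‖K (x₁ - x₂ + fun j => k.1 j * (z j : ℤ))‖).toReal := by
        refine Finset.sum_congr rfl fun x₂ hx₂ => ?_
        rw [← ENNReal.ofReal_tsum_of_nonneg (fun k => norm_nonneg _) (hsummK x₂ hx₂),
          ENNReal.toReal_ofReal (tsum_nonneg fun k => norm_nonneg _)]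
    _ = (∑ x₂ ∈ latJ y, ∑' k : {k : Fin d → ℤ // k ≠ 0},
          ENNReal.ofReal ‖K (x₁ - x₂ + fun j => k.1 j * (z j : ℤ))‖).toReal :=
        (ENNReal.toReal_sum hfin).symm
    _ ≤ R.toReal := by
        apply ENNReal.toReal_mono hRne
        calc (∑ x₂ ∈ latJ y, ∑' k : {k : Fin d → ℤ // k ≠ 0},
              ENNReal.ofReal ‖K (x₁ - x₂ + fun j => k.1 j * (z j : ℤ))‖)
            = ∑' x₂ : ↑(latJ y), ∑' k : {k : Fin d → ℤ // k ≠ 0},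
                ENNReal.ofReal ‖K (x₁ - (x₂ : Fin d → ℤ) + fun j => k.1 j * (z j : ℤ))‖ :=
              (Finset.tsum_subtype _ _).symm
          _ = ∑' pr : ↑(latJ y) × {k : Fin d → ℤ // k ≠ 0},
                ENNReal.ofReal ‖K (x₁ - (pr.1 : Fin d → ℤ) + fun j => pr.2.1 j * (z j : ℤ))‖ :=
              (ENNReal.tsum_prod' (f := fun pr : ↑(latJ y) × {k : Fin d → ℤ // k ≠ 0} =>
                ENNReal.ofReal ‖K (x₁ - (pr.1 : Fin d → ℤ) +
                  fun j => pr.2.1 j * (z j : ℤ))‖)).symm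
          _ ≤ R := hdouble


end
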